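/- Let 𝒜 be a unital ⋆-algebra over ℂ (so that the star operation is conjugate-linear with respect to the ℂ-action) and n ∈ ℕ. Let Q ∈ M_{n×n}(𝒜) be invertible, u ∈ M_{1×n}(𝒜), and v ∈ M_{n×1}(𝒜); denote by M* the conjugate transpose of a matrix M over 𝒜. Then the block matrix Q̂ := [[0, Q*], [Q, 0]] of size 2n is invertible with Q̂⁻¹ = [[0, Q⁻¹], [(Q*)⁻¹, 0]], and for the block column v̂ := [(1/2)•u*; v] ∈ M_{(2n)×1}(𝒜) one has −v̂*·Q̂⁻¹·v̂ = −(1/2)•(u·Q⁻¹·v + (u·Q⁻¹·v)*) as 1×1 matrices over 𝒜. In particular, if the unique entry of u·Q⁻¹·v is selfadjoint, then −v̂*·Q̂⁻¹·v̂ = −u·Q⁻¹·v. -/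

import Mathlib

open Matrix

/-- The selfadjoint hermitization of a formal linear representation: `[[0,Q*],[Q,0]]` is
invertible with inverse `[[0,Q⁻¹],[(Q*)⁻¹,0]]`, and with `v̂ = [(1/2)•u*; v]` one has
`−v̂*·Q̂⁻¹·v̂ = −(1/2)•(uQ⁻¹v + (uQ⁻¹v)*)`; if the entry of `uQ⁻¹v` is selfadjoint this
equals `−uQ⁻¹v`. -/
theorem stmt_12 (𝒜 : Type*) [Ring 𝒜] [Algebra ℂ 𝒜] [StarRing 𝒜] [StarModule ℂ 𝒜] (n : ℕ)
    (Q : Matrix (Fin n) (Fin n) 𝒜) [Invertible Q]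
    (u : Matrix (Fin 1) (Fin n) 𝒜) (v : Matrix (Fin n) (Fin 1) 𝒜) :
    let Qhat : Matrix (Fin n ⊕ Fin n) (Fin n ⊕ Fin n) 𝒜 := Matrix.fromBlocks 0 Qᴴ Q 0
    let Qhatinv : Matrix (Fin n ⊕ Fin n) (Fin n ⊕ Fin n) 𝒜 :=
      Matrix.fromBlocks 0 (⅟Q) ((⅟Q)ᴴ) 0
    let vhat : Matrix (Fin n ⊕ Fin n) (Fin 1) 𝒜 :=
      Matrix.fromRows (((1 : ℂ)/2) • uᴴ) v
    Qhat * Qhatinv = 1 ∧ Qhatinv * Qhat = 1 ∧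
      -(vhatᴴ * Qhatinv * vhat) = -(((1 : ℂ)/2) • (u * ⅟Q * v + (u * ⅟Q * v)ᴴ)) ∧
      (IsSelfAdjoint ((u * ⅟Q * v) 0 0) →
        -(vhatᴴ * Qhatinv * vhat) = -(u * ⅟Q * v)) := by
  intro Qhat Qhatinv vhat
  have h1 : Qhat * Qhatinv = 1 := by
    simp only [Qhat, Qhatinv, Matrix.fromBlocks_multiply, Matrix.zero_mul, Matrix.mul_zero,
      add_zero, zero_add, ← Matrix.conjTranspose_mul, invOf_mul_self, mul_invOf_self]
    simp [← Matrix.fromBlocks_one]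
  have h2 : Qhatinv * Qhat = 1 := by
    simp only [Qhat, Qhatinv, Matrix.fromBlocks_multiply, Matrix.zero_mul, Matrix.mul_zero,
      add_zero, zero_add, ← Matrix.conjTranspose_mul, invOf_mul_self, mul_invOf_self]
    simp [← Matrix.fromBlocks_one]
  have key : vhatᴴ * Qhatinv * vhat = ((1 : ℂ)/2) • (u * ⅟Q * v + (u * ⅟Q * v)ᴴ) := by
    have hv : vhatᴴ = Matrix.fromCols (((1 : ℂ)/2) • u) vᴴ := by
      simp [vhat, Matrix.conjTranspose_fromRows_eq_fromCols_conjTranspose,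
        Matrix.conjTranspose_smul]
    rw [hv]
    show Matrix.fromCols _ _ * Qhatinv * Matrix.fromRows _ _ = _
    rw [Matrix.mul_assoc, show Qhatinv = Matrix.fromBlocks 0 (⅟Q) ((⅟Q)ᴴ) 0 from rfl,
      Matrix.fromBlocks_mul_fromRows, Matrix.fromCols_mul_fromRows]
    simp only [Matrix.zero_mul, Matrix.mul_zero, add_zero, zero_add, Matrix.smul_mul,
      Matrix.mul_smul, smul_add]
    rw [← Matrix.mul_assoc]
    congr 1
    · simp [Matrix.mul_assoc]
    · rw [← Matrix.conjTranspose_mul, ← Matrix.conjTranspose_mul, Matrix.mul_assoc]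
  refine ⟨h1, h2, by rw [key], fun hsa => ?_⟩
  rw [key]
  have hH : (u * ⅟Q * v)ᴴ = u * ⅟Q * v := by
    ext i j
    rw [Subsingleton.elim i 0, Subsingleton.elim j 0]
    rw [Matrix.conjTranspose_apply]
    exact hsa
  rw [hH]
  congr 1
  rw [← two_smul ℂ (u * ⅟Q * v), smul_smul]
  norm_num
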